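/- Let U be a standard normal real random variable, k ≥ 1 an integer and Z ∈ ℝ^k. Then ‖ N(0, I_k) − N(Z, I_k) ‖_TV = P( |U| ≤ ‖Z‖/2 ) ≤ ‖Z‖/√(2π). -/

import Mathlib

open MeasureTheory ProbabilityTheory Matrix Filter Real Asymptotics Topology

noncomputable section

/-- Standard Gaussian measure on `Fin d → ℝ`. -/
def stdGaussian (d : ℕ) : Measure (Fin d → ℝ) :=
  Measure.pi fun _ => gaussianReal 0 1

open Classical in
/-- Gaussian measure on `Fin d → ℝ` with mean `m` and positive semidefinite covariance `S`
(by convention the zero measure if `S` is not positive semidefinite). -/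
def gaussianVec {d : ℕ} (m : Fin d → ℝ) (S : Matrix (Fin d) (Fin d) ℝ) :
    Measure (Fin d → ℝ) :=
  if h : S.PosSemidef then (stdGaussian d).map (fun x => m + ((h.1.eigenvectorUnitary : Matrix (Fin d) (Fin d) ℝ) *
      diagonal ((√·) ∘ h.1.eigenvalues) *
      (star h.1.eigenvectorUnitary : Matrix (Fin d) (Fin d) ℝ)).mulVec x) else 0

/-- Total variation distance between two measures. -/
def tvDist {E : Type*} [MeasurableSpace E] (μ ν : Measure E) : ℝ :=
  ⨆ s : Set E, |(μ s).toReal - (ν s).toReal|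

/-- Euclidean norm of a vector. -/
def vecNorm {d : ℕ} (x : Fin d → ℝ) : ℝ := Real.sqrt (∑ i, x i ^ 2)

/-- Posterior measure built from a prior and a (possibly unnormalized) likelihood. -/
def posteriorMeas {T : Type*} [MeasurableSpace T] (μ : Measure T) (L : T → ENNReal) :
    Measure T :=
  ((μ.withDensity L) Set.univ)⁻¹ • μ.withDensity L

/-- Gaussian regression likelihood of `θ` given observation `y` (up to normalization):
the density of `N(Φθ, σ²Iₙ)` at `y`, up to a constant factor. -/
def regLik {n k : ℕ} (Φ : Matrix (Fin n) (Fin k) ℝ) (σ : ℝ) (y : Fin n → ℝ)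
    (θ : Fin k → ℝ) : ENNReal :=
  ENNReal.ofReal (Real.exp (-(∑ i, (y i - Φ.mulVec θ i) ^ 2) / (2 * σ ^ 2)))

/-- Least squares / maximum likelihood estimator `θ_Y = (ΦᵀΦ)⁻¹ΦᵀY`. -/
def thetaLS {n k : ℕ} (Φ : Matrix (Fin n) (Fin k) ℝ) (y : Fin n → ℝ) : Fin k → ℝ :=
  ((Φᵀ * Φ)⁻¹ * Φᵀ).mulVec y

/-- Orthogonal projection matrix `P = Φ(ΦᵀΦ)⁻¹Φᵀ` onto the column span of `Φ`. -/
def projMat {n k : ℕ} (Φ : Matrix (Fin n) (Fin k) ℝ) : Matrix (Fin n) (Fin n) ℝ :=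
  Φ * (Φᵀ * Φ)⁻¹ * Φᵀ

/-- A measure conditioned to a set. -/
def condMeas {T : Type*} [MeasurableSpace T] (μ : Measure T) (E : Set T) : Measure T :=
  (μ E)⁻¹ • μ.restrict E

/-- The ellipsoid `𝓔_{θ₀,Φ}(M) = {θ : (θ−θ₀)ᵀΦᵀΦ(θ−θ₀) ≤ σ²M}`. -/
def ellipsoid {n k : ℕ} (Φ : Matrix (Fin n) (Fin k) ℝ) (θ₀ : Fin k → ℝ) (σ M : ℝ) :
    Set (Fin k → ℝ) :=
  {θ | dotProduct (θ - θ₀) ((Φᵀ * Φ).mulVec (θ - θ₀)) ≤ σ ^ 2 * M}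

/-- `ψ(s) = P(Z ∈ s)` for a standard normal `Z`. -/
def gaussProb (s : Set ℝ) : ℝ := ((gaussianReal 0 1) s).toReal

section TVHelpers
open Set
open scoped ENNReal NNReal RealInnerProductSpace

lemma lintegral_pi_prod : ∀ {n : ℕ} (f : Fin n → ℝ → ℝ≥0∞), (∀ i, Measurable (f i)) →
    ∫⁻ x : (Fin n → ℝ), ∏ i, f i (x i) ∂(Measure.pi fun _ => (volume : Measure ℝ))
      = ∏ i, ∫⁻ y, f i y := by
  intro n
  induction n with
  | zero =>
    intro f hf
    rw [Measure.pi_of_empty (fun _ => (volume : Measure ℝ)) (isEmptyElim)]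
    simp [lintegral_dirac]
  | succ n ih =>
    intro f hf
    have hmp := measurePreserving_piFinSuccAbove (fun _ : Fin (n+1) => (volume : Measure ℝ)) 0
    set e := MeasurableEquiv.piFinSuccAbove (fun _ : Fin (n+1) => ℝ) 0
    set g : (Fin n → ℝ) → ℝ≥0∞ := fun y => ∏ j, f (Fin.succ j) (y j) with hgdef
    have hgm : Measurable g :=
      Finset.measurable_prod _ fun j _ => ((hf j.succ).comp (measurable_pi_apply j))
    have hG : Measurable (fun p : ℝ × (Fin n → ℝ) => f 0 p.1 * g p.2) :=
      ((hf 0).comp measurable_fst).mul (hgm.comp measurable_snd)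
    have key : ∀ x : Fin (n+1) → ℝ,
        (∏ i, f i (x i)) = f 0 ((e x).1) * g ((e x).2) := by
      intro x
      rw [Fin.prod_univ_succ]
      rfl
    calc ∫⁻ x : (Fin (n+1) → ℝ), ∏ i, f i (x i) ∂(Measure.pi fun _ => (volume : Measure ℝ))
        = ∫⁻ x, (fun p : ℝ × (Fin n → ℝ) => f 0 p.1 * g p.2) (e x)
            ∂(Measure.pi fun _ => (volume : Measure ℝ)) := lintegral_congr key
      _ = ∫⁻ p : ℝ × (Fin n → ℝ), f 0 p.1 * g p.2
            ∂((volume : Measure ℝ).prod (Measure.pi fun _ : Fin n => (volume : Measure ℝ))) :=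
          hmp.lintegral_comp hG
      _ = (∫⁻ y, f 0 y) * ∫⁻ y, g y ∂(Measure.pi fun _ : Fin n => (volume : Measure ℝ)) :=
          lintegral_prod_mul (hf 0).aemeasurable hgm.aemeasurable
      _ = (∫⁻ y, f 0 y) * ∏ j : Fin n, ∫⁻ y, f j.succ y := by
          rw [hgdef, ih (fun j => f j.succ) (fun j => hf j.succ)]
      _ = ∏ i, ∫⁻ y, f i y := by rw [Fin.prod_univ_succ]


def phik (k : ℕ) : (Fin k → ℝ) → ℝ≥0∞ := fun x => ∏ i, gaussianPDF 0 1 (x i)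

lemma phik_meas (k : ℕ) : Measurable (phik k) :=
  Finset.measurable_prod _ fun i _ => (measurable_gaussianPDF 0 1).comp (measurable_pi_apply i)


lemma stdGaussian_eq (k : ℕ) :
    stdGaussian k = (volume : Measure (Fin k → ℝ)).withDensity (phik k) := by
  refine Measure.pi_eq fun s hs => ?_
  rw [withDensity_apply _ (MeasurableSet.univ_pi hs)]
  have : ∀ x : Fin k → ℝ, (Set.pi univ s).indicator (phik k) x
      = ∏ i, (s i).indicator (gaussianPDF 0 1) (x i) := by
    intro x
    by_cases hx : x ∈ Set.pi univ s
    · rw [indicator_of_mem hx]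
      refine Finset.prod_congr rfl fun i _ => ?_
      rw [indicator_of_mem (hx i (mem_univ i))]
    · rw [indicator_of_notMem hx]
      obtain ⟨i, hi⟩ := not_forall.mp fun h => hx (fun i _ => h i)
      exact (Finset.prod_eq_zero (Finset.mem_univ i) (by rw [indicator_of_notMem hi])).symm
  rw [← lintegral_indicator (MeasurableSet.univ_pi hs)]
  rw [show (volume : Measure (Fin k → ℝ)) = Measure.pi fun _ => (volume : Measure ℝ) from rfl]
  rw [lintegral_congr this, lintegral_pi_prod _ (fun i => (measurable_gaussianPDF 0 1).indicator (hs i))]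
  refine Finset.prod_congr rfl fun i _ => ?_
  rw [lintegral_indicator (hs i), ← withDensity_apply _ (hs i),
    ← gaussianReal_of_var_ne_zero 0 one_ne_zero]


lemma withDensity_map_eq {α : Type*} [MeasurableSpace α] {μ : Measure α} {T T' : α → α}
    (hT : MeasurePreserving T μ μ) (hT' : Measurable T') (hTT' : ∀ x, T' (T x) = x)
    {f : α → ℝ≥0∞} (hf : Measurable f) :
    (μ.withDensity f).map T = μ.withDensity (f ∘ T') := by
  ext s hs
  rw [Measure.map_apply hT.measurable hs,
    withDensity_apply _ (hT.measurable hs), withDensity_apply _ hs]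
  calc ∫⁻ x in T ⁻¹' s, f x ∂μ = ∫⁻ x in T ⁻¹' s, f (T' (T x)) ∂μ := by
        refine setLIntegral_congr_fun (hT.measurable hs) ?_
        intro x _; simp only [hTT']
    _ = ∫⁻ y in s, f (T' y) ∂(μ.map T) :=
        (setLIntegral_map hs (hf.comp hT') hT.measurable).symm
    _ = ∫⁻ y in s, (f ∘ T') y ∂μ := by rw [hT.map_eq]; rfl



lemma exists_rotation (m : ℕ) (Z : Fin (m+1) → ℝ) (hZ : Z ≠ 0) :
    ∃ T T' : (Fin (m+1) → ℝ) → (Fin (m+1) → ℝ),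
      MeasurePreserving T (volume : Measure (Fin (m+1) → ℝ)) volume ∧ Measurable T' ∧
      (∀ x, T' (T x) = x) ∧
      (∀ x, ∑ i, (T x i)^2 = ∑ i, x i ^ 2) ∧ (∀ x, ∑ i, (T' x i)^2 = ∑ i, x i ^ 2) ∧
      (∀ x, ∑ i, T x i * Z i = Real.sqrt (∑ i, Z i ^ 2) * x 0) := by
  set Z' : EuclideanSpace ℝ (Fin (m+1)) := (WithLp.equiv 2 (Fin (m+1) → ℝ)).symm Z with hZ'
  set r : ℝ := Real.sqrt (∑ i, Z i ^ 2) with hr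
  have hsq : ∀ y : Fin (m+1) → ℝ,
      ∑ i, y i ^ 2 = ‖(WithLp.equiv 2 (Fin (m+1) → ℝ)).symm y‖ ^ 2 := by
    intro y
    rw [EuclideanSpace.norm_eq, Real.sq_sqrt (by positivity)]
    refine Finset.sum_congr rfl fun i _ => ?_
    rw [WithLp.equiv_symm_apply, PiLp.toLp_apply, Real.norm_eq_abs, sq_abs]
  have hZ'norm : ‖Z'‖ = r := by
    rw [hr, hsq Z, Real.sqrt_sq (norm_nonneg _)]
  have hrpos : 0 < r := by
    rw [← hZ'norm]
    refine norm_pos_iff.mpr ?_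
    simp only [hZ', ne_eq, EmbeddingLike.map_eq_zero_iff]
    simpa [WithLp.equiv_symm_apply] using hZ
  have horth : Orthonormal ℝ (({0} : Set (Fin (m+1))).restrict (fun _ => r⁻¹ • Z')) := by
    constructor
    · intro i
      show ‖r⁻¹ • Z'‖ = 1
      simp only [Set.restrict_apply, norm_smul, norm_inv, Real.norm_eq_abs,
        abs_of_pos hrpos, hZ'norm]
      field_simp
    · intro i j hij
      exact absurd (Subtype.ext (by
        have hi := i.2; have hj := j.2
        simp only [Set.mem_singleton_iff] at hi hj
        rw [hi, hj])) hij
  obtain ⟨b, hb⟩ := horth.exists_orthonormalBasis_extension_of_card_eq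
    (by simp [finrank_euclideanSpace])
  have hb0 : b 0 = r⁻¹ • Z' := hb 0 rfl
  refine ⟨fun x => WithLp.equiv 2 (Fin (m+1) → ℝ)
      (b.repr.symm ((WithLp.equiv 2 (Fin (m+1) → ℝ)).symm x)),
    fun x => WithLp.equiv 2 (Fin (m+1) → ℝ)
      (b.repr ((WithLp.equiv 2 (Fin (m+1) → ℝ)).symm x)), ?_, ?_, ?_, ?_, ?_, ?_⟩
  · exact (PiLp.volume_preserving_ofLp (Fin (m+1))).comp
      ((b.repr.symm.measurePreserving).comp (PiLp.volume_preserving_toLp (Fin (m+1))))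
  · exact (PiLp.volume_preserving_ofLp (Fin (m+1))).measurable.comp
      ((b.repr.measurePreserving).measurable.comp
        (PiLp.volume_preserving_toLp (Fin (m+1))).measurable)
  · intro x; simp
  · intro x
    rw [hsq, hsq x]
    simp only [Equiv.symm_apply_apply]
    rw [b.repr.symm.norm_map]
  · intro x
    rw [hsq, hsq x]
    simp only [Equiv.symm_apply_apply]
    rw [b.repr.norm_map]
  · intro x
    have step : ∑ i, (WithLp.equiv 2 (Fin (m+1) → ℝ)
        (b.repr.symm ((WithLp.equiv 2 (Fin (m+1) → ℝ)).symm x))) i * Z i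
        = ⟪b.repr.symm ((WithLp.equiv 2 (Fin (m+1) → ℝ)).symm x), Z'⟫ := by
      rw [PiLp.inner_apply]
      refine Finset.sum_congr rfl fun i _ => ?_
      rw [hZ', RCLike.inner_apply, starRingEnd_apply, WithLp.equiv_symm_apply, PiLp.toLp_apply]
      exact mul_comm _ _
    rw [step]
    have hZ'r : Z' = r • b 0 := by
      rw [hb0, smul_smul, mul_inv_cancel₀ (ne_of_gt hrpos), one_smul]
    rw [hZ'r, real_inner_smul_right, real_inner_comm, ← OrthonormalBasis.repr_apply_apply,
      LinearIsometryEquiv.apply_symm_apply]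
    rfl


lemma phik_eq (k : ℕ) (x : Fin k → ℝ) :
    phik k x = ENNReal.ofReal ((Real.sqrt (2 * π))⁻¹ ^ k * Real.exp (-(∑ i, x i ^ 2) / 2)) := by
  unfold phik gaussianPDF
  rw [← ENNReal.ofReal_prod_of_nonneg (fun i _ => gaussianPDFReal_nonneg 0 1 (x i))]
  congr 1
  have : ∀ i : Fin k, gaussianPDFReal 0 1 (x i)
      = (Real.sqrt (2 * π))⁻¹ * Real.exp (-(x i ^ 2) / 2) := by
    intro i
    rw [gaussianPDFReal]
    norm_num
  rw [Finset.prod_congr rfl fun i _ => this i, Finset.prod_mul_distrib, Finset.prod_const,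
    Finset.card_univ, Fintype.card_fin, ← Real.exp_sum]
  congr 1
  rw [← Finset.sum_div, ← Finset.sum_neg_distrib]


lemma phik_mono (k : ℕ) {x y : Fin k → ℝ} (h : ∑ i, x i ^ 2 ≤ ∑ i, y i ^ 2) :
    phik k y ≤ phik k x := by
  rw [phik_eq, phik_eq]
  refine ENNReal.ofReal_le_ofReal ?_
  refine mul_le_mul_of_nonneg_left ?_ (by positivity)
  exact Real.exp_le_exp.mpr (by linarith)


lemma gauss_singleton (a : ℝ) : gaussianReal 0 1 {a} = 0 := by
  rw [gaussianReal_of_var_ne_zero 0 one_ne_zero,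
    withDensity_apply _ (measurableSet_singleton a),
    setLIntegral_measure_zero _ _ (measure_singleton a)]


lemma gauss_Icc_le (a : ℝ) (ha : 0 ≤ a) :
    ((gaussianReal 0 1) (Icc (-a) a)).toReal ≤ 2 * a / Real.sqrt (2 * π) := by
  have hle : (gaussianReal 0 1) (Icc (-a) a)
      ≤ ENNReal.ofReal ((Real.sqrt (2 * π))⁻¹) * ENNReal.ofReal (2 * a) := by
    rw [gaussianReal_of_var_ne_zero 0 one_ne_zero,
      withDensity_apply _ measurableSet_Icc]
    calc ∫⁻ x in Icc (-a) a, gaussianPDF 0 1 x ∂volume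
        ≤ ∫⁻ _ in Icc (-a) a, ENNReal.ofReal ((Real.sqrt (2 * π))⁻¹) ∂volume := by
          refine setLIntegral_mono measurable_const fun x _ => ?_
          rw [gaussianPDF, gaussianPDFReal]
          refine ENNReal.ofReal_le_ofReal ?_
          simp only [NNReal.coe_one, mul_one, sub_zero]
          calc (Real.sqrt (2 * π))⁻¹ * Real.exp (-(x ^ 2) / 2)
              ≤ (Real.sqrt (2 * π))⁻¹ * 1 := by
                refine mul_le_mul_of_nonneg_left ?_ (by positivity)
                rw [Real.exp_le_one_iff]
                nlinarith [sq_nonneg x]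
            _ = (Real.sqrt (2 * π))⁻¹ := mul_one _
      _ = ENNReal.ofReal ((Real.sqrt (2 * π))⁻¹) * volume (Icc (-a) a) :=
          setLIntegral_const _ _
      _ = ENNReal.ofReal ((Real.sqrt (2 * π))⁻¹) * ENNReal.ofReal (2 * a) := by
          rw [Real.volume_Icc]
          norm_num
          ring_nf
          rw [ENNReal.ofReal_mul' zero_le_two, ENNReal.ofReal_ofNat]
          ring
  calc ((gaussianReal 0 1) (Icc (-a) a)).toReal
      ≤ (ENNReal.ofReal ((Real.sqrt (2 * π))⁻¹) * ENNReal.ofReal (2 * a)).toReal := by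
        refine ENNReal.toReal_mono (by finiteness) hle
    _ = (Real.sqrt (2 * π))⁻¹ * (2 * a) := by
        rw [ENNReal.toReal_mul, ENNReal.toReal_ofReal (by positivity),
          ENNReal.toReal_ofReal (by positivity)]
    _ = 2 * a / Real.sqrt (2 * π) := by ring


lemma stdGaussian_eval (m : ℕ) (s : Set ℝ) (hs : MeasurableSet s) :
    stdGaussian (m+1) {x | x 0 ∈ s} = gaussianReal 0 1 s := by
  have : {x : Fin (m+1) → ℝ | x 0 ∈ s} = Set.pi univ (Function.update (fun _ => univ) 0 s) := by
    rw [Set.univ_pi_update_univ]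
    rfl
  rw [this, _root_.stdGaussian, Measure.pi_pi]
  rw [Finset.prod_eq_single_of_mem 0 (Finset.mem_univ 0)
    (fun b _ hb => by rw [Function.update_of_ne hb]; simp)]
  rw [Function.update_self]


lemma tv_comparison {α : Type*} [MeasurableSpace α] (μ ν : Measure α)
    [IsProbabilityMeasure μ] [IsProbabilityMeasure ν]
    {H : Set α} (hH : MeasurableSet H)
    (h1 : ∀ A : Set α, MeasurableSet A → A ⊆ H → ν A ≤ μ A)
    (h2 : ∀ A : Set α, MeasurableSet A → A ⊆ Hᶜ → μ A ≤ ν A)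
    (s : Set α) : |(μ s).toReal - (ν s).toReal| ≤ (μ H).toReal - (ν H).toReal := by
  have key : ∀ t : Set α, MeasurableSet t → (μ t).toReal - (ν t).toReal
      ≤ (μ H).toReal - (ν H).toReal := by
    intro t ht
    have e1 : μ t = μ (t ∩ H) + μ (t \ H) := (measure_inter_add_diff t hH).symm
    have e2 : ν t = ν (t ∩ H) + ν (t \ H) := (measure_inter_add_diff t hH).symm
    have e3 : μ H = μ (H ∩ t) + μ (H \ t) := (measure_inter_add_diff H ht).symm
    have e4 : ν H = ν (H ∩ t) + ν (H \ t) := (measure_inter_add_diff H ht).symm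
    have h5 : μ (t \ H) ≤ ν (t \ H) :=
      h2 _ (ht.diff hH) (fun x hx => hx.2)
    have h6 : ν (H \ t) ≤ μ (H \ t) := h1 _ (hH.diff ht) diff_subset
    have hit : t ∩ H = H ∩ t := inter_comm t H
    rw [e1, e2, e3, e4, ENNReal.toReal_add (measure_ne_top _ _) (measure_ne_top _ _),
      ENNReal.toReal_add (measure_ne_top _ _) (measure_ne_top _ _),
      ENNReal.toReal_add (measure_ne_top _ _) (measure_ne_top _ _),
      ENNReal.toReal_add (measure_ne_top _ _) (measure_ne_top _ _), hit]
    have h5' := ENNReal.toReal_mono (measure_ne_top _ _) h5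
    have h6' := ENNReal.toReal_mono (measure_ne_top _ _) h6
    linarith
  have key2 : ∀ t : Set α, MeasurableSet t → (ν t).toReal - (μ t).toReal
      ≤ (μ H).toReal - (ν H).toReal := by
    intro t ht
    have hc := key tᶜ ht.compl
    have hμ : (μ tᶜ).toReal = 1 - (μ t).toReal := by
      rw [measure_compl ht (measure_ne_top _ _),
        ENNReal.toReal_sub_of_le (measure_mono (subset_univ t)) (measure_ne_top _ _),
        measure_univ, ENNReal.toReal_one]
    have hν : (ν tᶜ).toReal = 1 - (ν t).toReal := by
      rw [measure_compl ht (measure_ne_top _ _),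
        ENNReal.toReal_sub_of_le (measure_mono (subset_univ t)) (measure_ne_top _ _),
        measure_univ, ENNReal.toReal_one]
    rw [hμ, hν] at hc
    linarith
  rw [abs_sub_le_iff]
  constructor
  · -- μ s − ν s: use ν-hull
    set t := toMeasurable ν s with htdef
    have h1' : μ s ≤ μ t := measure_mono (subset_toMeasurable ν s)
    have h2' : ν t = ν s := measure_toMeasurable s
    have := key t (measurableSet_toMeasurable ν s)
    rw [h2'] at this
    have := ENNReal.toReal_mono (measure_ne_top _ _) h1'
    linarith
  · set t := toMeasurable μ s with htdef
    have h1' : ν s ≤ ν t := measure_mono (subset_toMeasurable μ s)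
    have h2' : μ t = μ s := measure_toMeasurable s
    have := key2 t (measurableSet_toMeasurable μ s)
    rw [h2'] at this
    have := ENNReal.toReal_mono (measure_ne_top _ _) h1'
    linarith
end TVHelpers

/-- **Total variation distance between translated standard Gaussians** (Lemma 4). -/
theorem tv_gaussian_translation (k : ℕ) (hk : 1 ≤ k) (Z : Fin k → ℝ) :
    tvDist (gaussianVec (0 : Fin k → ℝ) 1) (gaussianVec Z 1) =
      ((gaussianReal 0 1) {u : ℝ | |u| ≤ vecNorm Z / 2}).toReal ∧
    ((gaussianReal 0 1) {u : ℝ | |u| ≤ vecNorm Z / 2}).toReal ≤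
      vecNorm Z / Real.sqrt (2 * π) := by
  obtain ⟨m, rfl⟩ : ∃ m, k = m + 1 := ⟨k - 1, (Nat.succ_pred_eq_of_pos hk).symm⟩
  have hpsd : (1 : Matrix (Fin (m+1)) (Fin (m+1)) ℝ).PosSemidef := Matrix.PosSemidef.one
  have hgv : ∀ w : Fin (m+1) → ℝ,
      gaussianVec w 1 = (stdGaussian (m+1)).map (fun x => w + x) := by
    intro w
    rw [gaussianVec, dif_pos hpsd]
    congr 1
    funext x
    have hev : ∀ i, hpsd.1.eigenvalues i = 1 := by
      intro i
      rw [hpsd.1.eigenvalues_eq, Matrix.one_mulVec, dotProduct_comm,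
        ← EuclideanSpace.inner_eq_star_dotProduct, real_inner_self_eq_norm_sq,
        hpsd.1.eigenvectorBasis.orthonormal.1 i]
      simp
    simp [hev, Function.comp_def]
  have hμ0 : gaussianVec (0 : Fin (m+1) → ℝ) 1 = stdGaussian (m+1) := by
    rw [hgv]
    simp only [zero_add]
    exact Measure.map_id
  have instμ : IsProbabilityMeasure (stdGaussian (m+1)) := by
    rw [_root_.stdGaussian]; infer_instance
  rcases eq_or_ne Z 0 with hZ0 | hZ0
  · subst hZ0
    have hvn : vecNorm (0 : Fin (m+1) → ℝ) = 0 := by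
      rw [vecNorm]
      simp
    have hset : {u : ℝ | |u| ≤ vecNorm (0 : Fin (m+1) → ℝ) / 2} = {(0:ℝ)} := by
      rw [hvn]
      ext u
      simp [abs_nonpos_iff]
    constructor
    · rw [hμ0, hset, gauss_singleton, tvDist]
      simp only [sub_self, abs_zero, ciSup_const, ENNReal.toReal_zero]
    · rw [hset, gauss_singleton, hvn]
      simp
  · -- main case
    set r : ℝ := vecNorm Z with hrdef
    have hsum_pos : 0 < ∑ i, Z i ^ 2 := by
      rcases Function.ne_iff.mp hZ0 with ⟨i, hi⟩
      have : 0 < Z i ^ 2 := pow_two_pos_of_ne_zero (by simpa using hi)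
      exact Finset.sum_pos' (fun j _ => by positivity) ⟨i, Finset.mem_univ i, this⟩
    have hr : 0 < r := by
      rw [hrdef, vecNorm]
      exact Real.sqrt_pos.mpr hsum_pos
    have hr2 : r ^ 2 = ∑ i, Z i ^ 2 := by
      rw [hrdef, vecNorm, Real.sq_sqrt hsum_pos.le]
    obtain ⟨T, T', hTmp, hT'm, hTT', hTsum, hT'sum, hTL⟩ := exists_rotation m Z hZ0
    rw [show Real.sqrt (∑ i, Z i ^ 2) = r from rfl] at hTL
    set L : (Fin (m+1) → ℝ) → ℝ := fun y => ∑ i, y i * Z i with hLdef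
    have hLmeas : Measurable L :=
      Finset.measurable_sum _ fun i _ => (measurable_pi_apply i).mul_const _
    set H : Set (Fin (m+1) → ℝ) := {x | L x < r ^ 2 / 2} with hHdef
    have hHmeas : MeasurableSet H := measurableSet_lt hLmeas measurable_const
    set μ := stdGaussian (m+1) with hμdef
    set ν := μ.map (fun x => Z + x) with hνdef
    have instν : IsProbabilityMeasure ν :=
      Measure.isProbabilityMeasure_map (measurable_const_add Z).aemeasurable
    -- density representations
    have hμd : μ = (volume : Measure (Fin (m+1) → ℝ)).withDensity (phik (m+1)) :=
      stdGaussian_eq (m+1)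
    have hνd : ν = (volume : Measure (Fin (m+1) → ℝ)).withDensity
        ((phik (m+1)) ∘ (fun x => -Z + x)) := by
      rw [hνdef, hμd]
      exact withDensity_map_eq (measurePreserving_add_left volume Z)
        (measurable_const_add (-Z)) (fun x => by simp) (phik_meas (m+1))
    -- invariance of μ under T
    have hinv : μ.map T = μ := by
      rw [hμd, withDensity_map_eq hTmp hT'm hTT' (phik_meas (m+1))]
      congr 1
      funext x
      show phik (m+1) (T' x) = phik (m+1) x
      rw [phik_eq, phik_eq, hT'sum]
    -- computation of μ on halfspaces
    have compute1 : ∀ a : ℝ, μ {x | L x < r * a} = gaussianReal 0 1 (Set.Iio a) := by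
      intro a
      have hset_meas : MeasurableSet {x : Fin (m+1) → ℝ | L x < r * a} :=
        measurableSet_lt hLmeas measurable_const
      have h1 : T ⁻¹' {x | L x < r * a} = {x | x 0 < a} := by
        ext x
        simp only [Set.mem_preimage, Set.mem_setOf_eq, hLdef]
        rw [hTL x]
        exact mul_lt_mul_iff_right₀ hr
      calc μ {x | L x < r * a} = (μ.map T) {x | L x < r * a} := by rw [hinv]
        _ = μ (T ⁻¹' {x | L x < r * a}) := Measure.map_apply hTmp.measurable hset_meas
        _ = μ {x | x 0 < a} := by rw [h1]
        _ = gaussianReal 0 1 (Set.Iio a) := stdGaussian_eval m (Set.Iio a) measurableSet_Iio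
    have hμH : μ H = gaussianReal 0 1 (Set.Iio (r / 2)) := by
      have : H = {x | L x < r * (r / 2)} := by
        rw [hHdef]
        congr 1
        funext x
        congr 1
        ring_nf
      rw [this, compute1]
    have hνH : ν H = gaussianReal 0 1 (Set.Iio (-(r / 2))) := by
      have hLZ : L Z = r ^ 2 := by
        rw [hLdef, hr2]
        exact Finset.sum_congr rfl fun i _ => (sq (Z i)).symm ▸ (pow_two (Z i)) ▸ rfl
      have hpre : (fun x => Z + x) ⁻¹' H = {x | L x < r * (-(r / 2))} := by
        ext x
        simp only [Set.mem_preimage, hHdef, Set.mem_setOf_eq, hLdef]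
        have : ∑ i, (Z + x) i * Z i = (∑ i, Z i * Z i) + ∑ i, x i * Z i := by
          rw [← Finset.sum_add_distrib]
          exact Finset.sum_congr rfl fun i _ => by simp [add_mul]
        rw [this]
        have h2 : ∑ i, Z i * Z i = r ^ 2 := by
          rw [hr2]; exact Finset.sum_congr rfl fun i _ => (sq (Z i)).symm
        rw [h2]
        constructor <;> intro h <;> nlinarith
      rw [hνdef, Measure.map_apply (measurable_const_add Z) hHmeas, hpre, compute1]
    -- density comparison
    have hcomp1 : ∀ A : Set (Fin (m+1) → ℝ), MeasurableSet A → A ⊆ H → ν A ≤ μ A := by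
      intro A hA hAH
      rw [hμd, hνd, withDensity_apply _ hA, withDensity_apply _ hA]
      refine setLIntegral_mono (phik_meas (m+1)) fun x hx => ?_
      refine phik_mono (m+1) ?_
      have hxH : L x < r ^ 2 / 2 := hAH hx
      have : ∑ i, ((-Z + x) i) ^ 2 = (∑ i, x i ^ 2) - 2 * L x + r ^ 2 := by
        rw [hr2, hLdef, Finset.mul_sum, ← Finset.sum_sub_distrib, ← Finset.sum_add_distrib]
        refine Finset.sum_congr rfl fun i _ => ?_
        simp only [Pi.add_apply, Pi.neg_apply]
        ring
      rw [this]
      nlinarith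
    have hcomp2 : ∀ A : Set (Fin (m+1) → ℝ), MeasurableSet A → A ⊆ Hᶜ → μ A ≤ ν A := by
      intro A hA hAH
      rw [hμd, hνd, withDensity_apply _ hA, withDensity_apply _ hA]
      refine setLIntegral_mono ((phik_meas (m+1)).comp (measurable_const_add (-Z)))
        fun x hx => ?_
      refine phik_mono (m+1) ?_
      have hxH : ¬ (L x < r ^ 2 / 2) := hAH hx
      push_neg at hxH
      have : ∑ i, ((-Z + x) i) ^ 2 = (∑ i, x i ^ 2) - 2 * L x + r ^ 2 := by
        rw [hr2, hLdef, Finset.mul_sum, ← Finset.sum_sub_distrib, ← Finset.sum_add_distrib]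
        refine Finset.sum_congr rfl fun i _ => ?_
        simp only [Pi.add_apply, Pi.neg_apply]
        ring
      rw [this]
      nlinarith
    -- the value c
    set c : ℝ := (μ H).toReal - (ν H).toReal with hcdef
    have hub : ∀ s : Set (Fin (m+1) → ℝ), |(μ s).toReal - (ν s).toReal| ≤ c :=
      fun s => tv_comparison μ ν hHmeas hcomp1 hcomp2 s
    have hc0 : 0 ≤ c := by
      have := hub ∅
      simpa using this
    have htv : tvDist (gaussianVec (0 : Fin (m+1) → ℝ) 1) (gaussianVec Z 1) = c := by
      rw [hμ0, hgv Z, ← hνdef, tvDist]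
      refine le_antisymm (ciSup_le hub) ?_
      refine le_ciSup_of_le ⟨c, ?_⟩ H ?_
      · rintro y ⟨s, rfl⟩
        exact hub s
      · rw [← hcdef, abs_of_nonneg (by rw [hcdef] at hc0 ⊢; linarith)]
    -- identify c with the gaussian probability of Icc
    have hIcc : {u : ℝ | |u| ≤ vecNorm Z / 2} = Set.Icc (-(r/2)) (r/2) := by
      ext u
      simp only [Set.mem_setOf_eq, Set.mem_Icc, ← hrdef]
      rw [abs_le]
    have hsplit : gaussianReal 0 1 (Set.Iio (r/2))
        = gaussianReal 0 1 (Set.Iio (-(r/2))) + gaussianReal 0 1 (Set.Ico (-(r/2)) (r/2)) := by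
      rw [← Set.Iio_union_Ico_eq_Iio (by linarith : -(r/2) ≤ r/2)]
      exact measure_union ((Set.Iio_disjoint_Ici le_rfl).mono_right Set.Ico_subset_Ici_self)
        measurableSet_Ico
    have hIccIco : gaussianReal 0 1 (Set.Icc (-(r/2)) (r/2))
        = gaussianReal 0 1 (Set.Ico (-(r/2)) (r/2)) := by
      rw [← Set.Ico_union_right (by linarith : -(r/2) ≤ r/2),
        measure_union (Set.disjoint_singleton_right.mpr (fun h => (lt_irrefl _ h.2).elim))
          (measurableSet_singleton _), gauss_singleton, add_zero]
    have hceq : c = ((gaussianReal 0 1) {u : ℝ | |u| ≤ vecNorm Z / 2}).toReal := by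
      rw [hcdef, hμH, hνH, hIcc, hIccIco, hsplit,
        ENNReal.toReal_add (measure_ne_top _ _) (measure_ne_top _ _)]
      ring
    refine ⟨htv.trans hceq, ?_⟩
    rw [hIcc]
    have := gauss_Icc_le (r/2) (by linarith)
    calc ((gaussianReal 0 1) (Set.Icc (-(r/2)) (r/2))).toReal
        ≤ 2 * (r/2) / Real.sqrt (2 * π) := this
      _ = vecNorm Z / Real.sqrt (2 * π) := by rw [← hrdef]; ring_nf
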